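/- arXiv:math/0604503 — 3 statements merged into one kernel-verified Lean document; each statement's English description precedes it below -/
import Mathlib

section
/- Let ζ = i ∈ ℂ (a primitive 4th root of unity) and for a natural number d define the Vafa–Intriligator sum S_d = Σ_{0 ≤ i₂ < i₁ ≤ 3} (ζ^{i₁} + ζ^{i₂})^{4d+4} · (ζ^{i₁} − ζ^{i₂}) · (ζ^{i₂} − ζ^{i₁}) / (ζ^{i₁} · ζ^{i₂})³. Then S_d = (−1)^d · 2^{2d+5}. -/
open Finset Complex

/-- The Vafa–Intriligator sum for `G(2,4)` in degree `d`, with `ζ = i` a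
primitive 4th root of unity:
`S_d = Σ_{0 ≤ i₂ < i₁ ≤ 3} (ζ^{i₁} + ζ^{i₂})^{4d+4} (ζ^{i₁} − ζ^{i₂})(ζ^{i₂} − ζ^{i₁}) / (ζ^{i₁} ζ^{i₂})³`. -/
noncomputable def vafaIntriligatorSum (d : ℕ) : ℂ :=
  ∑ i₁ ∈ Finset.range 4, ∑ i₂ ∈ Finset.range i₁,
    (Complex.I ^ i₁ + Complex.I ^ i₂) ^ (4 * d + 4) *
      (Complex.I ^ i₁ - Complex.I ^ i₂) * (Complex.I ^ i₂ - Complex.I ^ i₁) /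
        (Complex.I ^ i₁ * Complex.I ^ i₂) ^ 3

theorem vafaIntriligatorSum_eq (d : ℕ) :
    vafaIntriligatorSum d = (-1 : ℂ) ^ d * 2 ^ (2 * d + 5) := by
  have hI2 : (I : ℂ) ^ 2 = -1 := Complex.I_sq
  have hI3 : (I : ℂ) ^ 3 = -I := by rw [pow_succ, hI2]; ring
  have hI4 : (I : ℂ) ^ 4 = 1 := by rw [show 4 = 2*2 from rfl, pow_mul, hI2]; norm_num
  have hsq : ((1 : ℂ) + I) ^ 2 = 2 * I := by rw [add_sq, hI2]; ring
  have h40 : ((1 : ℂ) + I) ^ 4 = -4 := by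
    rw [show 4 = 2*2 from rfl, pow_mul, hsq, mul_pow, hI2]; ring
  have hone : ∀ z : ℂ, z ^ 4 = 1 → z ^ (4 * d + 4) = 1 := by
    intro z hz
    rw [show 4*d+4 = 4*(d+1) by ring, pow_mul, hz, one_pow]
  have h1 : ((1 : ℂ) + I) ^ (4 * d + 4) = (-4 : ℂ) ^ (d + 1) := by
    rw [show 4*d+4 = 4*(d+1) by ring, pow_mul, h40]
  have h2 : ((-1 : ℂ) + I) ^ (4 * d + 4) = (-4 : ℂ) ^ (d + 1) := by
    rw [show ((-1 : ℂ) + I) = I * (1 + I) by rw [mul_add, mul_one, ← hI2]; ring,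
      mul_pow, h1, hone I hI4, one_mul]
  have h3 : ((1 : ℂ) - I) ^ (4 * d + 4) = (-4 : ℂ) ^ (d + 1) := by
    rw [show ((1 : ℂ) - I) = (-I) * (1 + I) by rw [show (-I:ℂ)*(1+I) = -I - I^2 by ring, hI2]; ring,
      mul_pow, h1, hone (-I) (by rw [show (-I:ℂ) = (-1)*I by ring, mul_pow, hI4]; norm_num),
      one_mul]
  have h4 : ((-1 : ℂ) - I) ^ (4 * d + 4) = (-4 : ℂ) ^ (d + 1) := by
    rw [show ((-1 : ℂ) - I) = (-1) * (1 + I) by ring,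
      mul_pow, h1, hone (-1) (by norm_num), one_mul]
  have hz : ((-1 : ℂ) + 1) ^ (4 * d + 4) = 0 := by simp
  have hz2 : ((-I : ℂ) + I) ^ (4 * d + 4) = 0 := by simp
  unfold vafaIntriligatorSum
  simp only [Finset.sum_range_succ, Finset.sum_range_zero, Finset.sum_range_one,
    pow_zero, pow_one, hI2, hI3]
  rw [hz, hz2]
  rw [show ((I:ℂ) + 1) = (1 + I) by ring, h1, h2,
    show ((-I:ℂ) + 1) = (1 - I) by ring, h3,
    show ((-I:ℂ) + -1) = (-1 - I) by ring, h4]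
  have hrw : (-4 : ℂ) ^ (d + 1) = (-1:ℂ)^d * 2^(2*d) * (-4) := by
    rw [pow_succ, show (-4:ℂ) = (-1) * 2^2 by norm_num, mul_pow, ← pow_mul]
  rw [hrw]
  have hIne : (I : ℂ) ≠ 0 := Complex.I_ne_zero
  field_simp
  ring_nf
  rw [hI2, hI4]
  ring
end

section
/- Let ζ = i ∈ ℂ (a primitive 4th root of unity) and for a natural number d define the Vafa–Intriligator sum S_d = Σ_{0 ≤ i₂ < i₁ ≤ 3} (ζ^{i₁} + ζ^{i₂})^{4d+4} · (ζ^{i₁} − ζ^{i₂}) · (ζ^{i₂} − ζ^{i₁}) / (ζ^{i₁} · ζ^{i₂})³. Then the absolute value of (1/16) · S_d equals 2^{2d+1}. (This is the degree P_d of the Quot scheme R_d compactifying degree-d maps ℙ¹ → G(2,4) under the generalized Plücker embedding: P_d = 2^{2d+1}.) -/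
open Finset Complex

lemma pow4 (z : ℂ) (h : z ^ 4 = -4) (d : ℕ) : z ^ (4 * d + 4) = (-4) ^ (d + 1) := by
  have : 4 * d + 4 = 4 * (d + 1) := by ring
  rw [this, pow_mul, h]

lemma VIval (d : ℕ) : vafaIntriligatorSum d = -8 * (-4) ^ (d + 1) := by
  have e3 : Complex.I ^ 3 = -Complex.I := by rw [pow_succ, Complex.I_sq]; ring
  have e4 : Complex.I ^ 4 = 1 := by rw [pow_succ, e3]; simp [Complex.I_mul_I]
  have h1 : (Complex.I + 1) ^ 4 = -4 := by ring_nf; rw [e3, e4]; ring_nf; rw [Complex.I_sq]; ring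
  have h2 : (-1 + Complex.I) ^ 4 = -4 := by ring_nf; rw [e3, e4]; ring_nf; rw [Complex.I_sq]; ring
  have h3 : (-Complex.I + 1) ^ 4 = -4 := by ring_nf; rw [e3, e4]; ring_nf; rw [Complex.I_sq]; ring
  have h4 : (-Complex.I + -1) ^ 4 = -4 := by ring_nf; rw [e3, e4]; ring_nf; rw [Complex.I_sq]; ring
  unfold vafaIntriligatorSum
  simp only [Finset.sum_range_succ, Finset.sum_range_zero, Finset.sum_range_one,
    pow_zero, pow_one]
  have hI2 : Complex.I ^ 2 = -1 := Complex.I_sq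
  have hI3 : Complex.I ^ 3 = -Complex.I := by rw [pow_succ, hI2]; ring
  rw [hI2, hI3]
  rw [pow4 _ h1 d, pow4 _ h2 d, pow4 _ h3 d, pow4 _ h4 d]
  have hne : Complex.I ≠ 0 := Complex.I_ne_zero
  field_simp
  ring_nf
  rw [hI2, e4]
  ring
/-- The degree `P_d` of the Quot scheme `R_d` under the generalized Plücker
embedding equals `2^{2d+1}`: the absolute value of `(1/16) · S_d` is `2^{2d+1}`. -/
theorem pluecker_degree_quot_scheme (d : ℕ) :
    ‖(1 / 16 : ℂ) * vafaIntriligatorSum d‖ = 2 ^ (2 * d + 1) := by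
  rw [VIval]
  rw [norm_mul, norm_mul, norm_pow, norm_neg, norm_neg]
  simp [Complex.norm_ofNat]
  rw [show ((4:ℝ)) = 2^2 by norm_num, ← pow_mul]
  rw [show (2:ℝ)^(2*d+1) = 2^(2*(d+1)) / 2 by rw [pow_succ]; ring_nf]
  norm_num
  ring
end

section
/- Let ζ = i ∈ ℂ (a primitive 4th root of unity) and for a natural number d define the Vafa–Intriligator sum S_d = Σ_{0 ≤ i₂ < i₁ ≤ 3} (ζ^{i₁} + ζ^{i₂})^{4d+4} · (ζ^{i₁} − ζ^{i₂}) · (ζ^{i₂} − ζ^{i₁}) / (ζ^{i₁} · ζ^{i₂})³. For d = 3 one has −(1/16) · S_3 = 128. (This is the degree of the Quot scheme R_3 under the generalized Plücker embedding, which the paper also obtains as 128 by Bott's residue formula applied to the 24 fixed-point components of the ℂ*-action on R_3.) -/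
open Finset Complex

set_option maxHeartbeats 2000000 in
/-- The degree of the Quot scheme `R_3` under the generalized Plücker
embedding: `−(1/16) · S_3 = 128`. -/
theorem pluecker_degree_R3 :
    -(1 / 16 : ℂ) * vafaIntriligatorSum 3 = 128 := by
  have h2 : Complex.I ^ 2 = -1 := Complex.I_sq
  have h3 : Complex.I ^ 3 = -Complex.I := by
    rw [pow_succ, h2]; ring
  have e1 : (Complex.I + 1) ^ 16 = 256 := by
    have : (Complex.I + 1) ^ 16 = ((Complex.I + 1) ^ 2) ^ 8 := by ring
    rw [this, show (Complex.I + 1) ^ 2 = 2 * Complex.I from by linear_combination h2]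
    have : (2 * Complex.I) ^ 8 = 256 * (Complex.I ^ 2) ^ 4 := by ring
    rw [this, h2]; ring
  have e2 : (-1 + Complex.I) ^ 16 = 256 := by
    have : (-1 + Complex.I) ^ 16 = ((-1 + Complex.I) ^ 2) ^ 8 := by ring
    rw [this, show (-1 + Complex.I) ^ 2 = -2 * Complex.I from by linear_combination h2]
    have : (-2 * Complex.I) ^ 8 = 256 * (Complex.I ^ 2) ^ 4 := by ring
    rw [this, h2]; ring
  have e3 : (-Complex.I + 1) ^ 16 = 256 := by
    have : (-Complex.I + 1) ^ 16 = ((-Complex.I + 1) ^ 2) ^ 8 := by ring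
    rw [this, show (-Complex.I + 1) ^ 2 = -2 * Complex.I from by linear_combination h2]
    have : (-2 * Complex.I) ^ 8 = 256 * (Complex.I ^ 2) ^ 4 := by ring
    rw [this, h2]; ring
  have e4 : (-Complex.I + -1) ^ 16 = 256 := by
    have : (-Complex.I + -1) ^ 16 = ((-Complex.I + -1) ^ 2) ^ 8 := by ring
    rw [this, show (-Complex.I + -1) ^ 2 = 2 * Complex.I from by linear_combination h2]
    have : (2 * Complex.I) ^ 8 = 256 * (Complex.I ^ 2) ^ 4 := by ring
    rw [this, h2]; ring
  have hIne : Complex.I ≠ 0 := Complex.I_ne_zero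
  simp only [vafaIntriligatorSum, Finset.sum_range_succ, Finset.sum_range_zero,
    pow_zero, pow_one, h2, h3, zero_add, show 4 * 3 + 4 = 16 from rfl]
  rw [e1, e2, e3, e4]
  norm_num
  field_simp
  linear_combination (-512 * Complex.I ^ 2 - 1024 * Complex.I - 512) * h2
end
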